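/- Let G be a graph with isolated vertices such that G ≠ G̃ (i.e., G has twins). Then for every t ≥ 1, the twin quotient of μ_t(G) satisfies μ_t(G̃) = (μ_t(G))~ + (t−1)·K_1. -/

import Mathlib

open SimpleGraph

/-- The generalized Mycielskian `μ_t(G)`: vertices are `some (s, i)` for levels
`0 ≤ s ≤ t` (level `0` being the original vertices) plus a root `none`. -/
def Mycielskian {V : Type*} (G : SimpleGraph V) (t : ℕ) :
    SimpleGraph (Option (Fin (t + 1) × V)) where
  Adj x y :=
    match x, y with
    | none, none => False
    | none, some (s, _) => s.val = t
    | some (s, _), none => s.val = t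
    | some (s, i), some (r, j) =>
        G.Adj i j ∧ ((s.val = 0 ∧ r.val = 0) ∨ s.val + 1 = r.val ∨ r.val + 1 = s.val)
  symm := by
    constructor
    rintro (_ | ⟨s, i⟩) (_ | ⟨r, j⟩) h
    · exact h
    · exact h
    · exact h
    · exact ⟨h.1.symm, by tauto⟩
  loopless := by
    constructor
    rintro (_ | ⟨s, i⟩) h
    · exact h
    · exact G.loopless.irrefl i h.1

/-- `S` is a determining set for `G`: the only automorphism fixing `S` pointwise
is the identity. -/
def IsDetermining {V : Type*} (G : SimpleGraph V) (S : Set V) : Prop :=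
  ∀ φ : G ≃g G, (∀ v ∈ S, φ v = v) → ∀ v, φ v = v

/-- The determining number of `G`. -/
noncomputable def detNum {V : Type*} (G : SimpleGraph V) : ℕ :=
  sInf {n | ∃ S : Finset V, S.card = n ∧ IsDetermining G ↑S}

/-- A coloring is distinguishing if no nontrivial automorphism preserves all
color classes. -/
def IsDistinguishing {V : Type*} (G : SimpleGraph V) {C : Type*} (c : V → C) : Prop :=
  ∀ φ : G ≃g G, (∀ v, c (φ v) = c v) → ∀ v, φ v = v

/-- The distinguishing number of `G`. -/
noncomputable def distNum {V : Type*} (G : SimpleGraph V) : ℕ :=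
  sInf {d | ∃ c : V → Fin d, IsDistinguishing G c}

/-- The cost of 2-distinguishing: the minimum size of a color class over all
2-distinguishing colorings. -/
noncomputable def cost2 {V : Type*} (G : SimpleGraph V) [Fintype V] : ℕ :=
  sInf {n | ∃ c : V → Bool, IsDistinguishing G c ∧
    n = (Finset.univ.filter fun v => c v = true).card}

/-- The twin equivalence relation: equal open neighborhoods. -/
def twinSetoid {V : Type*} (G : SimpleGraph V) : Setoid V where
  r x y := G.neighborSet x = G.neighborSet y
  iseqv := ⟨fun _ => rfl, Eq.symm, Eq.trans⟩

/-- The twin quotient graph `G̃`. -/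
def twinQuotient {V : Type*} (G : SimpleGraph V) :
    SimpleGraph (Quotient (twinSetoid G)) where
  Adj a b := ∃ p q : V, Quotient.mk (twinSetoid G) p = a ∧
    Quotient.mk (twinSetoid G) q = b ∧ G.Adj p q
  symm := by constructor; rintro a b ⟨p, q, hp, hq, h⟩; exact ⟨q, p, hq, hp, h.symm⟩
  loopless := by
    constructor
    rintro a ⟨p, q, rfl, hq, h⟩
    have htw : G.neighborSet q = G.neighborSet p := Quotient.exact hq
    have hmem : q ∈ G.neighborSet p := h
    rw [← htw] at hmem
    exact G.loopless.irrefl q hmem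

/-- A twin cover: contains at least one of every pair of distinct twins. -/
def IsTwinCover {V : Type*} (G : SimpleGraph V) (T : Set V) : Prop :=
  ∀ x y : V, x ≠ y → G.neighborSet x = G.neighborSet y → x ∈ T ∨ y ∈ T

/-- A minimum twin cover. -/
def IsMinTwinCover {V : Type*} (G : SimpleGraph V) (T : Set V) : Prop :=
  IsTwinCover G T ∧ ∀ T' : Set V, IsTwinCover G T' → T.ncard ≤ T'.ncard

/-- Attach `ℓ` pendant vertices to the vertex `w` of `G`. -/
def attachPendants {V : Type*} (G : SimpleGraph V) (w : V) (ℓ : ℕ) :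
    SimpleGraph (V ⊕ Fin ℓ) where
  Adj x y :=
    match x, y with
    | Sum.inl a, Sum.inl b => G.Adj a b
    | Sum.inl a, Sum.inr _ => a = w
    | Sum.inr _, Sum.inl b => b = w
    | Sum.inr _, Sum.inr _ => False
  symm := by constructor; rintro (a | a) (b | b) h <;> simp_all <;> exact h.symm
  loopless := by constructor; rintro (a | a) h <;> simp_all


section MycQuotAux

variable {V : Type*} {G : SimpleGraph V}

lemma twinQuotient_adj_iff (G : SimpleGraph V) (a b : V) :
    (twinQuotient G).Adj (Quotient.mk (twinSetoid G) a) (Quotient.mk (twinSetoid G) b) ↔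
      G.Adj a b := by
  constructor
  · rintro ⟨p, q, hp, hq, h⟩
    have hpa : G.neighborSet p = G.neighborSet a := Quotient.exact hp
    have hqb : G.neighborSet q = G.neighborSet b := Quotient.exact hq
    have h1 : q ∈ G.neighborSet p := h
    rw [hpa] at h1
    have h2 : a ∈ G.neighborSet q := (SimpleGraph.mem_neighborSet _ _ _).mp h1 |>.symm
    rw [hqb] at h2
    exact ((SimpleGraph.mem_neighborSet _ _ _).mp h2).symm
  · exact fun h => ⟨a, b, rfl, rfl, h⟩

lemma myc_adj_ss {t : ℕ} {s r : Fin (t + 1)} {i j : V} :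
    (Mycielskian G t).Adj (some (s, i)) (some (r, j)) ↔
      G.Adj i j ∧ ((s.val = 0 ∧ r.val = 0) ∨ s.val + 1 = r.val ∨ r.val + 1 = s.val) :=
  Iff.rfl

lemma myc_adj_ns {t : ℕ} {s : Fin (t + 1)} {i : V} :
    (Mycielskian G t).Adj none (some (s, i)) ↔ s.val = t := Iff.rfl

lemma myc_adj_sn {t : ℕ} {s : Fin (t + 1)} {i : V} :
    (Mycielskian G t).Adj (some (s, i)) none ↔ s.val = t := Iff.rfl

lemma myc_witness {t : ℕ} (ht : 1 ≤ t) (r : Fin (t + 1)) {j u : V} (hu : G.Adj j u) :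
    ∃ k : Fin (t + 1), (Mycielskian G t).Adj (some (r, j)) (some (k, u)) := by
  by_cases hr : r.val < t
  · exact ⟨⟨r.val + 1, by omega⟩, hu, Or.inr (Or.inl rfl)⟩
  · refine ⟨⟨r.val - 1, by omega⟩, hu, Or.inr (Or.inr ?_)⟩
    have := r.isLt
    show r.val - 1 + 1 = r.val
    omega

lemma twin_some_iff {t : ℕ} (ht : 1 ≤ t) (s r : Fin (t + 1)) (i j : V) :
    (Mycielskian G t).neighborSet (some (s, i)) = (Mycielskian G t).neighborSet (some (r, j)) ↔
      (G.neighborSet i = G.neighborSet j ∧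
        (s = r ∨ (s.val < t ∧ r.val < t ∧ G.neighborSet i = ∅))) := by
  rw [Set.ext_iff]
  simp only [SimpleGraph.mem_neighborSet]
  constructor
  · intro h
    have hnone := h none
    rw [myc_adj_sn, myc_adj_sn] at hnone
    have hN : G.neighborSet i = G.neighborSet j := by
      ext u
      simp only [SimpleGraph.mem_neighborSet]
      constructor
      · intro hu
        obtain ⟨k, hk⟩ := myc_witness ht s hu
        exact ((h _).mp hk).1
      · intro hu
        obtain ⟨k, hk⟩ := myc_witness ht r hu
        exact ((h _).mpr hk).1
    refine ⟨hN, ?_⟩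
    by_cases hiso : G.neighborSet i = ∅
    · by_cases hst : s.val = t
      · exact Or.inl (Fin.ext (show s.val = r.val by omega))
      · refine Or.inr ⟨by omega, ?_, hiso⟩
        have := r.isLt
        omega
    · obtain ⟨u, hu⟩ := Set.nonempty_iff_ne_empty.mpr hiso
      have hu : G.Adj i u := hu
      have hu' : G.Adj j u := by
        have : u ∈ G.neighborSet j := hN ▸ hu
        exact this
      by_cases hst : s.val = t
      · exact Or.inl (Fin.ext (show s.val = r.val by omega))
      · have hrt : r.val ≠ t := by omega
        have h1 : (Mycielskian G t).Adj (some (s, i)) (some (⟨s.val + 1, by omega⟩, u)) :=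
          ⟨hu, Or.inr (Or.inl rfl)⟩
        have e1 := ((h _).mp h1).2
        have h2 : (Mycielskian G t).Adj (some (r, j)) (some (⟨r.val + 1, by omega⟩, u)) :=
          ⟨hu', Or.inr (Or.inl rfl)⟩
        have e2 := ((h _).mpr h2).2
        simp only at e1 e2
        exact Or.inl (Fin.ext (show s.val = r.val by omega))
  · rintro ⟨hN, rfl | ⟨hs, hr, hiso⟩⟩
    · rintro (_ | ⟨k, v⟩)
      · exact Iff.rfl
      · rw [myc_adj_ss, myc_adj_ss]
        have : G.Adj i v ↔ G.Adj j v := by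
          rw [← SimpleGraph.mem_neighborSet, ← SimpleGraph.mem_neighborSet, hN]
        rw [this]
    · have hNj : G.neighborSet j = ∅ := hN ▸ hiso
      rintro (_ | ⟨k, v⟩)
      · rw [myc_adj_sn, myc_adj_sn]
        omega
      · rw [myc_adj_ss, myc_adj_ss]
        constructor
        · rintro ⟨ha, -⟩
          exact absurd (hiso ▸ ha : v ∈ (∅ : Set V)) (Set.notMem_empty v)
        · rintro ⟨ha, -⟩
          exact absurd (hNj ▸ ha : v ∈ (∅ : Set V)) (Set.notMem_empty v)

lemma mk_some_eq {t : ℕ} (ht : 1 ≤ t) (s : Fin (t + 1)) {i j : V}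
    (hij : G.neighborSet i = G.neighborSet j) :
    Quotient.mk (twinSetoid (Mycielskian G t)) (some (s, i)) =
      Quotient.mk (twinSetoid (Mycielskian G t)) (some (s, j)) :=
  Quotient.sound ((twin_some_iff ht s s i j).mpr ⟨hij, Or.inl rfl⟩)

lemma none_not_twin {t : ℕ} (ht : 1 ≤ t) {v₀ : V} (hv₀ : ∀ u : V, ¬ G.Adj v₀ u)
    {s : Fin (t + 1)} {i : V} :
    (Mycielskian G t).neighborSet none ≠ (Mycielskian G t).neighborSet (some (s, i)) := by
  intro h
  have hmem : some (⟨t, Nat.lt_succ_self t⟩, v₀) ∈ (Mycielskian G t).neighborSet none := by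
    show (⟨t, Nat.lt_succ_self t⟩ : Fin (t + 1)).val = t
    rfl
  rw [h] at hmem
  exact hv₀ i ((SimpleGraph.mem_neighborSet _ _ _).mp hmem).1.symm

lemma iota_not_adj {v₀ : V} (hv₀ : ∀ u : V, ¬ G.Adj v₀ u)
    (d : Quotient (twinSetoid G)) : ¬ (twinQuotient G).Adj (Quotient.mk (twinSetoid G) v₀) d := by
  rintro ⟨p, q, hp, hq, h⟩
  have hpv : G.neighborSet p = G.neighborSet v₀ := Quotient.exact hp
  have : q ∈ G.neighborSet p := h
  rw [hpv] at this
  exact hv₀ q this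


lemma mySum_adj_inl_inl {α β : Type*} {G : SimpleGraph α} {H : SimpleGraph β} {a b : α} :
    (G ⊕g H).Adj (Sum.inl a) (Sum.inl b) ↔ G.Adj a b := Iff.rfl

lemma mySum_adj_inl_inr {α β : Type*} {G : SimpleGraph α} {H : SimpleGraph β} {a : α} {b : β} :
    ¬ (G ⊕g H).Adj (Sum.inl a) (Sum.inr b) := by simp

lemma mySum_adj_inr_inl {α β : Type*} {G : SimpleGraph α} {H : SimpleGraph β} {a : β} {b : α} :
    ¬ (G ⊕g H).Adj (Sum.inr a) (Sum.inl b) := by simp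

lemma mySum_adj_inr_inr {α β : Type*} {G : SimpleGraph α} {H : SimpleGraph β} {a b : β} :
    (G ⊕g H).Adj (Sum.inr a) (Sum.inr b) ↔ H.Adj a b := Iff.rfl

open Classical in
noncomputable def mycF {V : Type*} (G : SimpleGraph V) (t : ℕ) (v₀ : V) :
    Option (Fin (t + 1) × Quotient (twinSetoid G)) →
      Quotient (twinSetoid (Mycielskian G t)) ⊕ Fin (t - 1) := fun x =>
  match x with
  | none => Sum.inl (Quotient.mk (twinSetoid (Mycielskian G t)) none)
  | some (s, c) =>
      if h : 1 ≤ s.val ∧ s.val < t ∧ c = Quotient.mk (twinSetoid G) v₀ then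
        Sum.inr ⟨s.val - 1, by omega⟩
      else Sum.inl (Quotient.mk (twinSetoid (Mycielskian G t)) (some (s, c.out)))

lemma mycF_none {t : ℕ} (v₀ : V) :
    mycF G t v₀ none = Sum.inl (Quotient.mk (twinSetoid (Mycielskian G t)) none) := rfl

open Classical in
lemma mycF_some {t : ℕ} (v₀ : V) (s : Fin (t + 1)) (c : Quotient (twinSetoid G)) :
    mycF G t v₀ (some (s, c)) =
      if h : 1 ≤ s.val ∧ s.val < t ∧ c = Quotient.mk (twinSetoid G) v₀ then
        Sum.inr ⟨s.val - 1, by omega⟩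
      else Sum.inl (Quotient.mk (twinSetoid (Mycielskian G t)) (some (s, c.out))) := rfl

end MycQuotAux

/-- for `G` with isolated vertices and twins,
`μ_t(G̃) = (μ_t(G))~ + (t−1)·K_1`. -/
theorem mycielskian_quotient_commute {V : Type*} [Fintype V] (G : SimpleGraph V)
    (hiso : ∃ v : V, ∀ u : V, ¬ G.Adj v u)
    (htwin : ∃ x y : V, x ≠ y ∧ G.neighborSet x = G.neighborSet y)
    (t : ℕ) (ht : 1 ≤ t) :
    Nonempty (Mycielskian (twinQuotient G) t ≃g
      (twinQuotient (Mycielskian G t) ⊕g (⊥ : SimpleGraph (Fin (t - 1))))) := by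
  classical
  obtain ⟨v₀, hv₀⟩ := hiso
  have hNv₀ : G.neighborSet v₀ = ∅ := by
    ext u
    simp only [SimpleGraph.mem_neighborSet, Set.mem_empty_iff_false, iff_false]
    exact hv₀ u
  have hNout : ∀ i : V, G.neighborSet (Quotient.mk (twinSetoid G) i).out = G.neighborSet i :=
    fun i => Quotient.exact (Quotient.out_eq (Quotient.mk (twinSetoid G) i))
  have hcι : ∀ c : Quotient (twinSetoid G),
      c = Quotient.mk (twinSetoid G) v₀ ↔ G.neighborSet c.out = ∅ := by
    intro c
    constructor
    · rintro rfl
      rw [hNout]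
      exact hNv₀
    · intro h
      rw [← Quotient.out_eq c]
      exact Quotient.sound (h.trans hNv₀.symm)
  have hinj : Function.Injective (mycF G t v₀) := by
    rintro (_ | ⟨s, c⟩) (_ | ⟨r, d⟩) h
    · rfl
    · rw [mycF_none, mycF_some] at h
      by_cases hc : 1 ≤ r.val ∧ r.val < t ∧ d = Quotient.mk (twinSetoid G) v₀
      · rw [dif_pos hc] at h
        simp at h
      · rw [dif_neg hc, Sum.inl.injEq] at h
        have h' : (Mycielskian G t).neighborSet none =
            (Mycielskian G t).neighborSet (some (r, d.out)) := Quotient.exact h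
        exact absurd h' (none_not_twin ht hv₀)
    · rw [mycF_none, mycF_some] at h
      by_cases hc : 1 ≤ s.val ∧ s.val < t ∧ c = Quotient.mk (twinSetoid G) v₀
      · rw [dif_pos hc] at h
        simp at h
      · rw [dif_neg hc, Sum.inl.injEq] at h
        have h' : (Mycielskian G t).neighborSet none =
            (Mycielskian G t).neighborSet (some (s, c.out)) := Quotient.exact h.symm
        exact absurd h' (none_not_twin ht hv₀)
    · rw [mycF_some, mycF_some] at h
      by_cases hc1 : 1 ≤ s.val ∧ s.val < t ∧ c = Quotient.mk (twinSetoid G) v₀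
      · rw [dif_pos hc1] at h
        by_cases hc2 : 1 ≤ r.val ∧ r.val < t ∧ d = Quotient.mk (twinSetoid G) v₀
        · rw [dif_pos hc2, Sum.inr.injEq, Fin.mk.injEq] at h
          have hsr : s = r := Fin.ext (by omega)
          rw [hsr, hc1.2.2, hc2.2.2]
        · rw [dif_neg hc2] at h
          simp at h
      · rw [dif_neg hc1] at h
        by_cases hc2 : 1 ≤ r.val ∧ r.val < t ∧ d = Quotient.mk (twinSetoid G) v₀
        · rw [dif_pos hc2] at h
          simp at h
        · rw [dif_neg hc2, Sum.inl.injEq] at h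
          have htw : (Mycielskian G t).neighborSet (some (s, c.out)) =
              (Mycielskian G t).neighborSet (some (r, d.out)) := Quotient.exact h
          rw [twin_some_iff ht] at htw
          obtain ⟨hN, hcase⟩ := htw
          have hcd : c = d := by
            rw [← Quotient.out_eq c, ← Quotient.out_eq d]
            exact Quotient.sound hN
          rcases hcase with hsr | ⟨hs, hr, hiso'⟩
          · rw [hsr, hcd]
          · have hcv : c = Quotient.mk (twinSetoid G) v₀ := (hcι c).mpr hiso'
            have hdv : d = Quotient.mk (twinSetoid G) v₀ := (hcι d).mpr (hN ▸ hiso')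
            have hs0 : s.val = 0 := by
              by_contra h0
              exact hc1 ⟨by omega, hs, hcv⟩
            have hr0 : r.val = 0 := by
              by_contra h0
              exact hc2 ⟨by omega, hr, hdv⟩
            rw [show s = r from Fin.ext (by omega), hcd]
  have hsurj : Function.Surjective (mycF G t v₀) := by
    rintro (q | k)
    · rcases hq : q.out with _ | ⟨s, i⟩
      · refine ⟨none, ?_⟩
        rw [mycF_none, ← Quotient.out_eq q, hq]
      · by_cases hcond : s.val ≠ 0 ∧ s.val < t ∧ G.neighborSet i = ∅
        · refine ⟨some (⟨0, by omega⟩, Quotient.mk (twinSetoid G) i), ?_⟩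
          rw [mycF_some, dif_neg (by
            rintro ⟨h1, -, -⟩
            have h1' : (1 : ℕ) ≤ 0 := h1
            omega), Sum.inl.injEq, ← Quotient.out_eq q, hq]
          apply Quotient.sound
          show (Mycielskian G t).neighborSet _ = (Mycielskian G t).neighborSet _
          rw [twin_some_iff ht]
          refine ⟨hNout i, Or.inr ⟨show (0 : ℕ) < t by omega, hcond.2.1, (hNout i).trans hcond.2.2⟩⟩
        · have hneg : ¬(1 ≤ s.val ∧ s.val < t ∧
              Quotient.mk (twinSetoid G) i = Quotient.mk (twinSetoid G) v₀) := by
            rintro ⟨hs1, hs2, hs3⟩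
            have : G.neighborSet i = ∅ := (hNout i).symm.trans ((hcι _).mp hs3)
            exact hcond ⟨by omega, hs2, this⟩
          refine ⟨some (s, Quotient.mk (twinSetoid G) i), ?_⟩
          rw [mycF_some, dif_neg hneg, Sum.inl.injEq, ← Quotient.out_eq q, hq]
          exact mk_some_eq ht s (hNout i)
    · refine ⟨some (⟨k.val + 1, by omega⟩, Quotient.mk (twinSetoid G) v₀), ?_⟩
      have hk := k.isLt
      rw [mycF_some, dif_pos ⟨by
        show 1 ≤ k.val + 1
        omega, by
        show k.val + 1 < t
        omega, rfl⟩]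
      congr 1
  refine ⟨⟨Equiv.ofBijective (mycF G t v₀) (show Function.Bijective (mycF G t v₀) from ⟨hinj, hsurj⟩), ?_⟩⟩
  intro a b
  simp only [Equiv.ofBijective_apply]
  rcases a with _ | ⟨s, c⟩ <;> rcases b with _ | ⟨r, d⟩
  · rw [mycF_none]
    exact iff_of_false (fun h =>
      (twinQuotient (Mycielskian G t)).loopless.irrefl _ (mySum_adj_inl_inl.mp h)) (fun h => h)
  · rw [mycF_none, mycF_some]
    by_cases hc : 1 ≤ r.val ∧ r.val < t ∧ d = Quotient.mk (twinSetoid G) v₀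
    · rw [dif_pos hc]
      refine iff_of_false mySum_adj_inl_inr ?_
      have := hc.2.1
      show ¬ r.val = t
      omega
    · rw [dif_neg hc]
      rw [mySum_adj_inl_inl]
      constructor
      · intro h
        exact (twinQuotient_adj_iff (Mycielskian G t) none (some (r, d.out))).mp h
      · intro h
        exact (twinQuotient_adj_iff (Mycielskian G t) none (some (r, d.out))).mpr h
  · rw [mycF_none, mycF_some]
    by_cases hc : 1 ≤ s.val ∧ s.val < t ∧ c = Quotient.mk (twinSetoid G) v₀
    · rw [dif_pos hc]
      refine iff_of_false mySum_adj_inr_inl ?_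
      have := hc.2.1
      show ¬ s.val = t
      omega
    · rw [dif_neg hc]
      rw [mySum_adj_inl_inl]
      constructor
      · intro h
        exact (twinQuotient_adj_iff (Mycielskian G t) (some (s, c.out)) none).mp h
      · intro h
        exact (twinQuotient_adj_iff (Mycielskian G t) (some (s, c.out)) none).mpr h
  · rw [mycF_some, mycF_some]
    have hnadj : ∀ e : Quotient (twinSetoid G), c = Quotient.mk (twinSetoid G) v₀ →
        ¬ (Mycielskian (twinQuotient G) t).Adj (some (s, c)) (some (r, e)) := by
      rintro e rfl ⟨hadj, -⟩
      exact iota_not_adj hv₀ e hadj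
    have hnadj' : ∀ e : Quotient (twinSetoid G), d = Quotient.mk (twinSetoid G) v₀ →
        ¬ (Mycielskian (twinQuotient G) t).Adj (some (s, e)) (some (r, d)) := by
      rintro e rfl ⟨hadj, -⟩
      exact iota_not_adj hv₀ e hadj.symm
    by_cases hc1 : 1 ≤ s.val ∧ s.val < t ∧ c = Quotient.mk (twinSetoid G) v₀
    · rw [dif_pos hc1]
      by_cases hc2 : 1 ≤ r.val ∧ r.val < t ∧ d = Quotient.mk (twinSetoid G) v₀
      · rw [dif_pos hc2]
        exact iff_of_false (by rw [mySum_adj_inr_inr]; exact fun h => h.elim)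
          (hnadj d hc1.2.2)
      · rw [dif_neg hc2]
        exact iff_of_false mySum_adj_inr_inl (hnadj d hc1.2.2)
    · rw [dif_neg hc1]
      by_cases hc2 : 1 ≤ r.val ∧ r.val < t ∧ d = Quotient.mk (twinSetoid G) v₀
      · rw [dif_pos hc2]
        exact iff_of_false mySum_adj_inl_inr (hnadj' c hc2.2.2)
      · rw [dif_neg hc2]
        rw [mySum_adj_inl_inl]
        have h1 := twinQuotient_adj_iff G c.out d.out
        rw [Quotient.out_eq, Quotient.out_eq] at h1
        constructor
        · intro h
          have h2 := (twinQuotient_adj_iff (Mycielskian G t)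
            (some (s, c.out)) (some (r, d.out))).mp h
          rw [myc_adj_ss] at h2
          rw [myc_adj_ss]
          exact ⟨h1.mpr h2.1, h2.2⟩
        · intro h
          rw [myc_adj_ss] at h
          refine (twinQuotient_adj_iff (Mycielskian G t)
            (some (s, c.out)) (some (r, d.out))).mpr ?_
          rw [myc_adj_ss]
          exact ⟨h1.mp h.1, h.2⟩
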